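/- For every u ∈ [0,1]: Σ_r (c_r − α − uβ) e^{u c_r} = f(u), where the sum is over all permutations r of {1,…,n}, f(u) = f₁(u)/(4n) + f₂(u)/(n²(n−1)) + f₃(u)/(4n²(n−1)), f₁(u) = Σ_{(j,k), j≠k} Σ_r z_{j,k,r(j),r(k)} (1 − u z_{j,k,r(j),r(k)} − exp(−u z_{j,k,r(j),r(k)})) e^{u c_r}, f₂(u) = Σ_{(j,k,ℓ) pairwise distinct} Σ_r u z_{j,k,r(j),r(k)}² (1 − exp(u z_{j,ℓ,r(ℓ),r(j)})) e^{u c_r}, and f₃(u) = Σ_{(j,k,ℓ,m) pairwise distinct} Σ_r u z_{j,k,r(j),r(k)}² (1 − exp(u z_{j,ℓ,r(ℓ),r(j)} + u z_{k,m,r(m),r(k)})) e^{u c_r}. -/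

import Mathlib

open scoped BigOperators

noncomputable section
namespace Stmt14Aux

variable {n : ℕ}

def Z (y : Fin n → Fin n → ℂ) (j k r s : Fin n) : ℂ := y j r - y k r - y j s + y k s
def C (y : Fin n → Fin n → ℂ) (π : Equiv.Perm (Fin n)) : ℂ := ∑ j, y j (π j)
def E (y : Fin n → Fin n → ℂ) (u : ℝ) (π : Equiv.Perm (Fin n)) : ℂ :=
  Complex.exp ((u : ℂ) * C y π)
def S (y : Fin n → Fin n → ℂ) (u : ℝ) (j k : Fin n) : ℂ :=
  ∑ π : Equiv.Perm (Fin n), (Z y j k (π j) (π k))^2 * E y u π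
def G (y : Fin n → Fin n → ℂ) (u : ℝ) (j k l : Fin n) : ℂ :=
  ∑ π : Equiv.Perm (Fin n), (Z y j k (π j) (π k))^2 *
    (1 - Complex.exp ((u : ℂ) * Z y j l (π l) (π j))) * E y u π
def Hh (y : Fin n → Fin n → ℂ) (u : ℝ) (j k l m : Fin n) : ℂ :=
  ∑ π : Equiv.Perm (Fin n), (Z y j k (π j) (π k))^2 *
    (1 - Complex.exp ((u : ℂ) * Z y j l (π l) (π j) + (u : ℂ) * Z y k m (π m) (π k))) * E y u π
def T (y : Fin n → Fin n → ℂ) (u : ℝ) : ℂ := ∑ π : Equiv.Perm (Fin n), E y u π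
def Yt (y : Fin n → Fin n → ℂ) (j r : Fin n) : ℂ :=
  y j r - (∑ k, y k r) / n - (∑ s, y j s) / n + (∑ k, ∑ s, y k s) / (n : ℂ) ^ 2

lemma Z_diag_left (y : Fin n → Fin n → ℂ) (j r s : Fin n) : Z y j j r s = 0 := by
  simp [Z]

lemma Z_diag_right (y : Fin n → Fin n → ℂ) (j k r : Fin n) : Z y j k r r = 0 := by
  simp [Z]

lemma Z_swap (y : Fin n → Fin n → ℂ) (j k r s : Fin n) : Z y j k s r = - Z y j k r s := by
  simp [Z]; ring

lemma Z_swap' (y : Fin n → Fin n → ℂ) (j k r s : Fin n) : Z y k j r s = - Z y j k r s := by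
  simp [Z]; ring

/-- reindexing sums over permutations by right multiplication -/
lemma perm_reindex (τ : Equiv.Perm (Fin n)) (F : Equiv.Perm (Fin n) → ℂ) :
    ∑ π : Equiv.Perm (Fin n), F (π * τ) = ∑ π : Equiv.Perm (Fin n), F π :=
  Fintype.sum_equiv (Equiv.mulRight τ) _ _ (fun _ => rfl)

lemma C_swap (y : Fin n → Fin n → ℂ) (π : Equiv.Perm (Fin n)) {j k : Fin n} (hjk : j ≠ k) :
    C y (π * Equiv.swap j k) = C y π - Z y j k (π j) (π k) := by
  have key : ∑ i, (y i ((π * Equiv.swap j k) i) - y i (π i))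
      = (y j (π k) - y j (π j)) + (y k (π j) - y k (π k)) := by
    rw [← Finset.sum_subset (Finset.subset_univ ({j, k} : Finset (Fin n)))]
    · rw [Finset.sum_pair hjk]
      simp [Equiv.Perm.mul_apply]
    · intro i _ hi
      simp only [Finset.mem_insert, Finset.mem_singleton, not_or] at hi
      rw [Equiv.Perm.mul_apply, Equiv.swap_apply_of_ne_of_ne hi.1 hi.2, sub_self]
  rw [Finset.sum_sub_distrib] at key
  simp only [C, Z]
  linear_combination key

lemma E_swap (y : Fin n → Fin n → ℂ) (u : ℝ) (π : Equiv.Perm (Fin n)) {j k : Fin n}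
    (hjk : j ≠ k) :
    E y u (π * Equiv.swap j k) = E y u π * Complex.exp (-((u : ℂ) * Z y j k (π j) (π k))) := by
  rw [E, C_swap y π hjk, E, ← Complex.exp_add]
  ring_nf


lemma C_swap2 (y : Fin n → Fin n → ℂ) (π : Equiv.Perm (Fin n)) {j k l m : Fin n}
    (hjk : j ≠ k) (hjl : j ≠ l) (hjm : j ≠ m) (hkl : k ≠ l) (hkm : k ≠ m) (hlm : l ≠ m) :
    C y (π * (Equiv.swap j l * Equiv.swap k m))
      = C y π - Z y j l (π j) (π l) - Z y k m (π k) (π m) := by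
  rw [← mul_assoc, C_swap y _ hkm, C_swap y π hjl]
  have h1 : (π * Equiv.swap j l) k = π k := by
    rw [Equiv.Perm.mul_apply, Equiv.swap_apply_of_ne_of_ne (Ne.symm hjk) hkl]
  have h2 : (π * Equiv.swap j l) m = π m := by
    rw [Equiv.Perm.mul_apply, Equiv.swap_apply_of_ne_of_ne (Ne.symm hjm) (Ne.symm hlm)]
  rw [h1, h2]

lemma E_swap2 (y : Fin n → Fin n → ℂ) (u : ℝ) (π : Equiv.Perm (Fin n)) {j k l m : Fin n}
    (hjk : j ≠ k) (hjl : j ≠ l) (hjm : j ≠ m) (hkl : k ≠ l) (hkm : k ≠ m) (hlm : l ≠ m) :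
    E y u (π * (Equiv.swap j l * Equiv.swap k m)) = E y u π *
      Complex.exp ((u : ℂ) * Z y j l (π l) (π j) + (u : ℂ) * Z y k m (π m) (π k)) := by
  rw [E, C_swap2 y π hjk hjl hjm hkl hkm hlm, E, ← Complex.exp_add]
  rw [Z_swap y j l (π l) (π j), Z_swap y k m (π m) (π k)]
  ring_nf

/-- K1: antisymmetrization over a transposition. -/
lemma key1 (y : Fin n → Fin n → ℂ) (u : ℝ) (j k : Fin n) :
    (2 : ℂ) * ∑ π : Equiv.Perm (Fin n), Z y j k (π j) (π k) * E y u π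
      = ∑ π : Equiv.Perm (Fin n), Z y j k (π j) (π k) *
          (1 - Complex.exp (-((u : ℂ) * Z y j k (π j) (π k)))) * E y u π := by
  by_cases hjk : j = k
  · subst hjk; simp [Z_diag_left]
  have h1 : ∑ π : Equiv.Perm (Fin n), Z y j k (π j) (π k) * E y u π
      = ∑ π : Equiv.Perm (Fin n), (- Z y j k (π j) (π k)) *
          (E y u π * Complex.exp (-((u : ℂ) * Z y j k (π j) (π k)))) := by
    conv_lhs => rw [← perm_reindex (Equiv.swap j k)
      (fun π => Z y j k (π j) (π k) * E y u π)]
    apply Finset.sum_congr rfl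
    intro π _
    have e1 : (π * Equiv.swap j k) j = π k := by
      rw [Equiv.Perm.mul_apply, Equiv.swap_apply_left]
    have e2 : (π * Equiv.swap j k) k = π j := by
      rw [Equiv.Perm.mul_apply, Equiv.swap_apply_right]
    simp only [e1, e2, E_swap y u π hjk, Z_swap y j k (π j) (π k)]
  rw [two_mul]
  nth_rewrite 2 [h1]
  rw [← Finset.sum_add_distrib]
  apply Finset.sum_congr rfl
  intro π _
  ring

/-- K3: one-swap decoupling. -/
lemma key3 (y : Fin n → Fin n → ℂ) (u : ℝ) {j k l : Fin n}
    (hjk : j ≠ k) (hjl : j ≠ l) (hkl : k ≠ l) :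
    ∑ π : Equiv.Perm (Fin n), (Z y j k (π l) (π k))^2 * E y u π = S y u j k - G y u j k l := by
  have h1 : ∑ π : Equiv.Perm (Fin n), (Z y j k (π l) (π k))^2 * E y u π
      = ∑ π : Equiv.Perm (Fin n), (Z y j k (π j) (π k))^2 *
          (E y u π * Complex.exp ((u : ℂ) * Z y j l (π l) (π j))) := by
    conv_lhs => rw [← perm_reindex (Equiv.swap j l)
      (fun π => (Z y j k (π l) (π k))^2 * E y u π)]
    apply Finset.sum_congr rfl
    intro π _
    have e1 : (π * Equiv.swap j l) l = π j := by
      rw [Equiv.Perm.mul_apply, Equiv.swap_apply_right]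
    have e2 : (π * Equiv.swap j l) k = π k := by
      rw [Equiv.Perm.mul_apply, Equiv.swap_apply_of_ne_of_ne (Ne.symm hjk) hkl]
    have e3 : Complex.exp (-((u : ℂ) * Z y j l (π j) (π l)))
        = Complex.exp ((u : ℂ) * Z y j l (π l) (π j)) := by
      rw [Z_swap y j l (π l) (π j)]; ring_nf
    simp only [e1, e2, E_swap y u π hjl, e3]
  rw [h1, S, G, ← Finset.sum_sub_distrib]
  apply Finset.sum_congr rfl
  intro π _
  ring

/-- K4: two-swap decoupling. -/
lemma key4 (y : Fin n → Fin n → ℂ) (u : ℝ) {j k l m : Fin n}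
    (hjk : j ≠ k) (hjl : j ≠ l) (hjm : j ≠ m) (hkl : k ≠ l) (hkm : k ≠ m) (hlm : l ≠ m) :
    ∑ π : Equiv.Perm (Fin n), (Z y j k (π l) (π m))^2 * E y u π
      = S y u j k - Hh y u j k l m := by
  have h1 : ∑ π : Equiv.Perm (Fin n), (Z y j k (π l) (π m))^2 * E y u π
      = ∑ π : Equiv.Perm (Fin n), (Z y j k (π j) (π k))^2 *
          (E y u π * Complex.exp ((u : ℂ) * Z y j l (π l) (π j) +
            (u : ℂ) * Z y k m (π m) (π k))) := by
    conv_lhs => rw [← perm_reindex (Equiv.swap j l * Equiv.swap k m)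
      (fun π => (Z y j k (π l) (π m))^2 * E y u π)]
    apply Finset.sum_congr rfl
    intro π _
    have e1 : (π * (Equiv.swap j l * Equiv.swap k m)) l = π j := by
      rw [Equiv.Perm.mul_apply, Equiv.Perm.mul_apply,
        Equiv.swap_apply_of_ne_of_ne (Ne.symm hkl) hlm, Equiv.swap_apply_right]
    have e2 : (π * (Equiv.swap j l * Equiv.swap k m)) m = π k := by
      rw [Equiv.Perm.mul_apply, Equiv.Perm.mul_apply, Equiv.swap_apply_right,
        Equiv.swap_apply_of_ne_of_ne (Ne.symm hjk) hkl]
    simp only [e1, e2, E_swap2 y u π hjk hjl hjm hkl hkm hlm]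
  rw [h1, S, Hh, ← Finset.sum_sub_distrib]
  apply Finset.sum_congr rfl
  intro π _
  ring


/-- K2: pointwise identity relating the double z-sum to `c π` and the grand total. -/
lemma key2 (y : Fin n → Fin n → ℂ) (π : Equiv.Perm (Fin n)) :
    ∑ j, ∑ k, Z y j k (π j) (π k)
      = 2 * n * C y π - 2 * ∑ j, ∑ r, y j r := by
  have e1 : ∀ j : Fin n, ∑ k, Z y j k (π j) (π k)
      = n * y j (π j) - (∑ k, y k (π j)) - (∑ r, y j r) + C y π := by
    intro j
    simp only [Z, Finset.sum_add_distrib, Finset.sum_sub_distrib, Finset.sum_const,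
      Finset.card_univ, Fintype.card_perm, Fintype.card_fin, nsmul_eq_mul]
    rw [Equiv.sum_comp π (fun r => y j r)]
    rfl
  rw [Finset.sum_congr rfl (fun j _ => e1 j)]
  simp only [Finset.sum_add_distrib, Finset.sum_sub_distrib, Finset.sum_const,
    Finset.card_univ, Fintype.card_fin, nsmul_eq_mul, ← Finset.mul_sum]
  rw [Finset.sum_comm (f := fun j k => y k (π j))]
  have e2 : ∀ k : Fin n, ∑ j, y k (π j) = ∑ r, y k r := fun k => Equiv.sum_comp π (y k)
  rw [Finset.sum_congr rfl (fun k _ => e2 k)]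
  simp only [C]
  ring

/-- Quadratic expansion lemma: for centered `g`, `Σ_{j,k} (g j − g k)² = 2n Σ g²`. -/
lemma sumL (g : Fin n → ℂ) (h : ∑ i, g i = 0) :
    ∑ j, ∑ k, (g j - g k)^2 = 2 * n * ∑ j, (g j)^2 := by
  have e1 : ∀ j : Fin n, ∑ k, (g j - g k)^2
      = n * (g j)^2 - 2 * g j * (∑ k, g k) + ∑ k, (g k)^2 := by
    intro j
    have : ∀ k : Fin n, (g j - g k)^2 = (g j)^2 - 2 * g j * g k + (g k)^2 := by
      intro k; ring
    rw [Finset.sum_congr rfl (fun k _ => this k)]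
    simp only [Finset.sum_add_distrib, Finset.sum_sub_distrib, Finset.sum_const,
      Finset.card_univ, Fintype.card_fin, nsmul_eq_mul, ← Finset.mul_sum]
  rw [Finset.sum_congr rfl (fun j _ => e1 j)]
  simp only [h, mul_zero, sub_zero, Finset.sum_add_distrib, Finset.sum_const,
    Finset.card_univ, Fintype.card_fin, nsmul_eq_mul, ← Finset.mul_sum]
  ring


lemma Yt_col (y : Fin n → Fin n → ℂ) (hn : (n : ℂ) ≠ 0) (r : Fin n) :
    ∑ j, Yt y j r = 0 := by
  simp only [Yt, Finset.sum_add_distrib, Finset.sum_sub_distrib, Finset.sum_const,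
    Finset.card_univ, Fintype.card_fin, nsmul_eq_mul, ← Finset.sum_div]
  field_simp
  ring

lemma Yt_row (y : Fin n → Fin n → ℂ) (hn : (n : ℂ) ≠ 0) (j : Fin n) :
    ∑ r, Yt y j r = 0 := by
  simp only [Yt, Finset.sum_add_distrib, Finset.sum_sub_distrib, Finset.sum_const,
    Finset.card_univ, Fintype.card_fin, nsmul_eq_mul, ← Finset.sum_div]
  rw [Finset.sum_comm (f := fun r k => y k r)]
  field_simp
  ring

lemma Z_eq_Yt (y : Fin n → Fin n → ℂ) (j k r s : Fin n) :
    Z y j k r s = Yt y j r - Yt y k r - Yt y j s + Yt y k s := by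
  simp only [Z, Yt]; ring

lemma Zsq_total (y : Fin n → Fin n → ℂ) (hn : (n : ℂ) ≠ 0) :
    ∑ j, ∑ k, ∑ r, ∑ s, (Z y j k r s)^2 = 4 * (n : ℂ)^2 * ∑ j, ∑ r, (Yt y j r)^2 := by
  -- inner two sums for fixed j,k: apply sumL in the (r,s) variables
  have step1 : ∀ j k : Fin n, ∑ r, ∑ s, (Z y j k r s)^2
      = 2 * n * ∑ r, (Yt y j r - Yt y k r)^2 := by
    intro j k
    have hcen : ∑ r, (Yt y j r - Yt y k r) = 0 := by
      rw [Finset.sum_sub_distrib, Yt_row y hn j, Yt_row y hn k, sub_zero]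
    have := sumL (fun r => Yt y j r - Yt y k r) hcen
    rw [← this]
    apply Finset.sum_congr rfl; intro r _
    apply Finset.sum_congr rfl; intro s _
    rw [Z_eq_Yt]; ring
  rw [Finset.sum_congr rfl (fun j _ => Finset.sum_congr rfl (fun k _ => step1 j k))]
  -- now  Σ_j Σ_k 2n Σ_r (w jr − w kr)² = 2n Σ_r Σ_j Σ_k (w jr − w kr)² = 4n² Σ w²
  have step2 : ∀ r : Fin n, ∑ j, ∑ k, (Yt y j r - Yt y k r)^2
      = 2 * n * ∑ j, (Yt y j r)^2 :=
    fun r => sumL (fun j => Yt y j r) (Yt_col y hn r)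
  calc ∑ j, ∑ k, 2 * (n : ℂ) * ∑ r, (Yt y j r - Yt y k r)^2
      = 2 * n * ∑ j, ∑ k, ∑ r, (Yt y j r - Yt y k r)^2 := by
        simp only [← Finset.mul_sum]
    _ = 2 * n * ∑ r, ∑ j, ∑ k, (Yt y j r - Yt y k r)^2 := by
        congr 1
        rw [show (∑ j, ∑ k, ∑ r, (Yt y j r - Yt y k r)^2)
            = ∑ j, ∑ r, ∑ k, (Yt y j r - Yt y k r)^2 from
          Finset.sum_congr rfl (fun j _ => Finset.sum_comm)]
        exact Finset.sum_comm
    _ = 2 * n * ∑ r, 2 * n * ∑ j, (Yt y j r)^2 := by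
        rw [Finset.sum_congr rfl (fun r _ => step2 r)]
    _ = 4 * (n : ℂ)^2 * ∑ r, ∑ j, (Yt y j r)^2 := by
        simp only [← Finset.mul_sum]; ring
    _ = 4 * (n : ℂ)^2 * ∑ j, ∑ r, (Yt y j r)^2 := by
        rw [Finset.sum_comm]

lemma Ssym (y : Fin n → Fin n → ℂ) (u : ℝ) (j k : Fin n) : S y u k j = S y u j k := by
  apply Finset.sum_congr rfl; intro π _
  have : Z y k j (π k) (π j) = Z y j k (π j) (π k) := by simp only [Z]; ring
  rw [this]

/-- The pointwise (in `(l,m)`) classification. -/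
lemma pointP (y : Fin n → Fin n → ℂ) (u : ℝ) {j k : Fin n} (hjk : j ≠ k) (l m : Fin n) :
    (if l = m then 0 else S y u j k)
      - (∑ π : Equiv.Perm (Fin n), (Z y j k (π l) (π m))^2 * E y u π)
    = (if l = j ∧ m ≠ j ∧ m ≠ k then G y u k j m else 0)
      + (if l = k ∧ m ≠ j ∧ m ≠ k then G y u j k m else 0)
      + (if m = k ∧ l ≠ j ∧ l ≠ k then G y u j k l else 0)
      + (if m = j ∧ l ≠ j ∧ l ≠ k then G y u k j l else 0)
      + (if l ≠ j ∧ l ≠ k ∧ m ≠ j ∧ m ≠ k ∧ l ≠ m then Hh y u j k l m else 0) := by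
  by_cases hlm : l = m
  · rw [if_pos hlm,
      if_neg (show ¬(l = j ∧ m ≠ j ∧ m ≠ k) from fun h => h.2.1 (hlm.symm.trans h.1)),
      if_neg (show ¬(l = k ∧ m ≠ j ∧ m ≠ k) from fun h => h.2.2 (hlm.symm.trans h.1)),
      if_neg (show ¬(m = k ∧ l ≠ j ∧ l ≠ k) from fun h => h.2.2 (hlm.trans h.1)),
      if_neg (show ¬(m = j ∧ l ≠ j ∧ l ≠ k) from fun h => h.2.1 (hlm.trans h.1)),
      if_neg (show ¬(l ≠ j ∧ l ≠ k ∧ m ≠ j ∧ m ≠ k ∧ l ≠ m) from fun h => h.2.2.2.2 hlm),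
      Finset.sum_eq_zero (fun π _ => by rw [hlm, Z_diag_right]; ring)]
    ring
  · rw [if_neg hlm]
    by_cases hlj : l = j
    · by_cases hmk : m = k
      · -- (l,m) = (j,k):  P = S
        have hPS : ∑ π : Equiv.Perm (Fin n), (Z y j k (π l) (π m))^2 * E y u π
            = S y u j k := by
          rw [S]; exact Finset.sum_congr rfl (fun π _ => by rw [hlj, hmk])
        rw [hPS,
          if_neg (show ¬(l = j ∧ m ≠ j ∧ m ≠ k) from fun h => h.2.2 hmk),
          if_neg (show ¬(l = k ∧ m ≠ j ∧ m ≠ k) from fun h => hjk (hlj.symm.trans h.1)),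
          if_neg (show ¬(m = k ∧ l ≠ j ∧ l ≠ k) from fun h => h.2.1 hlj),
          if_neg (show ¬(m = j ∧ l ≠ j ∧ l ≠ k) from fun h => hjk (h.1.symm.trans hmk)),
          if_neg (show ¬(l ≠ j ∧ l ≠ k ∧ m ≠ j ∧ m ≠ k ∧ l ≠ m) from fun h => h.1 hlj)]
        ring
      · -- l = j, m ∉ {j,k}:  P = S − G k j m
        have hmj : m ≠ j := fun h => hlm (hlj.trans h.symm)
        have hk := key3 y u (Ne.symm hjk) (show k ≠ m from fun h => hmk h.symm)
          (show j ≠ m from fun h => hmj h.symm)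
        have hPS : ∑ π : Equiv.Perm (Fin n), (Z y j k (π l) (π m))^2 * E y u π
            = ∑ π : Equiv.Perm (Fin n), (Z y k j (π m) (π j))^2 * E y u π := by
          refine Finset.sum_congr rfl (fun π _ => ?_)
          rw [hlj, show (Z y j k (π j) (π m))^2 = (Z y k j (π m) (π j))^2 from by
            simp only [Z]; ring]
        rw [hPS, hk, Ssym,
          if_pos (show (l = j ∧ m ≠ j ∧ m ≠ k) from ⟨hlj, hmj, hmk⟩),
          if_neg (show ¬(l = k ∧ m ≠ j ∧ m ≠ k) from fun h => hjk (hlj.symm.trans h.1)),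
          if_neg (show ¬(m = k ∧ l ≠ j ∧ l ≠ k) from fun h => hmk h.1),
          if_neg (show ¬(m = j ∧ l ≠ j ∧ l ≠ k) from fun h => hmj h.1),
          if_neg (show ¬(l ≠ j ∧ l ≠ k ∧ m ≠ j ∧ m ≠ k ∧ l ≠ m) from fun h => h.1 hlj)]
        ring
    · by_cases hlk : l = k
      · by_cases hmj : m = j
        · -- (l,m) = (k,j):  P = S
          have hPS : ∑ π : Equiv.Perm (Fin n), (Z y j k (π l) (π m))^2 * E y u π
              = S y u j k := by
            rw [S]; refine Finset.sum_congr rfl (fun π _ => ?_)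
            rw [hlk, hmj, show (Z y j k (π k) (π j))^2 = (Z y j k (π j) (π k))^2 from by
              simp only [Z]; ring]
          rw [hPS,
            if_neg (show ¬(l = j ∧ m ≠ j ∧ m ≠ k) from fun h => hlj h.1),
            if_neg (show ¬(l = k ∧ m ≠ j ∧ m ≠ k) from fun h => h.2.1 hmj),
            if_neg (show ¬(m = k ∧ l ≠ j ∧ l ≠ k) from fun h => hjk (hmj.symm.trans h.1)),
            if_neg (show ¬(m = j ∧ l ≠ j ∧ l ≠ k) from fun h => h.2.2 hlk),
            if_neg (show ¬(l ≠ j ∧ l ≠ k ∧ m ≠ j ∧ m ≠ k ∧ l ≠ m) from fun h => h.2.1 hlk)]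
          ring
        · -- l = k, m ∉ {j,k}:  P = S − G j k m
          have hmk : m ≠ k := fun h => hlm (hlk.trans h.symm)
          have hk := key3 y u hjk (show j ≠ m from fun h => hmj h.symm)
            (show k ≠ m from fun h => hmk h.symm)
          have hPS : ∑ π : Equiv.Perm (Fin n), (Z y j k (π l) (π m))^2 * E y u π
              = ∑ π : Equiv.Perm (Fin n), (Z y j k (π m) (π k))^2 * E y u π := by
            refine Finset.sum_congr rfl (fun π _ => ?_)
            rw [hlk, show (Z y j k (π k) (π m))^2 = (Z y j k (π m) (π k))^2 from by
              simp only [Z]; ring]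
          rw [hPS, hk,
            if_neg (show ¬(l = j ∧ m ≠ j ∧ m ≠ k) from fun h => hlj h.1),
            if_pos (show (l = k ∧ m ≠ j ∧ m ≠ k) from ⟨hlk, hmj, hmk⟩),
            if_neg (show ¬(m = k ∧ l ≠ j ∧ l ≠ k) from fun h => hmk h.1),
            if_neg (show ¬(m = j ∧ l ≠ j ∧ l ≠ k) from fun h => hmj h.1),
            if_neg (show ¬(l ≠ j ∧ l ≠ k ∧ m ≠ j ∧ m ≠ k ∧ l ≠ m) from fun h => h.2.1 hlk)]
          ring
      · by_cases hmk : m = k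
        · -- m = k, l ∉ {j,k}:  P = S − G j k l
          have hk := key3 y u hjk (show j ≠ l from fun h => hlj h.symm)
            (show k ≠ l from fun h => hlk h.symm)
          have hPS : ∑ π : Equiv.Perm (Fin n), (Z y j k (π l) (π m))^2 * E y u π
              = ∑ π : Equiv.Perm (Fin n), (Z y j k (π l) (π k))^2 * E y u π := by
            refine Finset.sum_congr rfl (fun π _ => ?_)
            rw [hmk]
          rw [hPS, hk,
            if_neg (show ¬(l = j ∧ m ≠ j ∧ m ≠ k) from fun h => hlj h.1),
            if_neg (show ¬(l = k ∧ m ≠ j ∧ m ≠ k) from fun h => hlk h.1),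
            if_pos (show (m = k ∧ l ≠ j ∧ l ≠ k) from ⟨hmk, hlj, hlk⟩),
            if_neg (show ¬(m = j ∧ l ≠ j ∧ l ≠ k) from fun h => hjk (h.1.symm.trans hmk)),
            if_neg (show ¬(l ≠ j ∧ l ≠ k ∧ m ≠ j ∧ m ≠ k ∧ l ≠ m) from
              fun h => h.2.2.2.1 hmk)]
          ring
        · by_cases hmj : m = j
          · -- m = j, l ∉ {j,k}:  P = S − G k j l
            have hk := key3 y u (Ne.symm hjk) (show k ≠ l from fun h => hlk h.symm)
              (show j ≠ l from fun h => hlj h.symm)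
            have hPS : ∑ π : Equiv.Perm (Fin n), (Z y j k (π l) (π m))^2 * E y u π
                = ∑ π : Equiv.Perm (Fin n), (Z y k j (π l) (π j))^2 * E y u π := by
              refine Finset.sum_congr rfl (fun π _ => ?_)
              rw [hmj, show (Z y j k (π l) (π j))^2 = (Z y k j (π l) (π j))^2 from by
                simp only [Z]; ring]
            rw [hPS, hk, Ssym,
              if_neg (show ¬(l = j ∧ m ≠ j ∧ m ≠ k) from fun h => hlj h.1),
              if_neg (show ¬(l = k ∧ m ≠ j ∧ m ≠ k) from fun h => hlk h.1),
              if_neg (show ¬(m = k ∧ l ≠ j ∧ l ≠ k) from fun h => hmk h.1),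
              if_pos (show (m = j ∧ l ≠ j ∧ l ≠ k) from ⟨hmj, hlj, hlk⟩),
              if_neg (show ¬(l ≠ j ∧ l ≠ k ∧ m ≠ j ∧ m ≠ k ∧ l ≠ m) from
                fun h => h.2.2.1 hmj)]
            ring
          · -- all four distinct:  P = S − H
            have hk := key4 y u hjk (show j ≠ l from fun h => hlj h.symm)
              (show j ≠ m from fun h => hmj h.symm)
              (show k ≠ l from fun h => hlk h.symm)
              (show k ≠ m from fun h => hmk h.symm) hlm
            rw [hk,
              if_neg (show ¬(l = j ∧ m ≠ j ∧ m ≠ k) from fun h => hlj h.1),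
              if_neg (show ¬(l = k ∧ m ≠ j ∧ m ≠ k) from fun h => hlk h.1),
              if_neg (show ¬(m = k ∧ l ≠ j ∧ l ≠ k) from fun h => hmk h.1),
              if_neg (show ¬(m = j ∧ l ≠ j ∧ l ≠ k) from fun h => hmj h.1),
              if_pos (show (l ≠ j ∧ l ≠ k ∧ m ≠ j ∧ m ≠ k ∧ l ≠ m) from
                ⟨hlj, hlk, hmj, hmk, hlm⟩)]
            ring

lemma key5 (y : Fin n → Fin n → ℂ) (u : ℝ) {j k : Fin n} (hjk : j ≠ k) :
    (n : ℂ) * ((n : ℂ) - 1) * S y u j k - (∑ r, ∑ s, (Z y j k r s)^2) * T y u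
      = 2 * (∑ l, if l ≠ j ∧ l ≠ k then G y u j k l + G y u k j l else 0)
        + ∑ l, ∑ m, (if l ≠ j ∧ l ≠ k ∧ m ≠ j ∧ m ≠ k ∧ l ≠ m then Hh y u j k l m else 0) := by
  -- (a) decoupled total
  have hA : (∑ r, ∑ s, (Z y j k r s)^2) * T y u
      = ∑ l, ∑ m, ∑ π : Equiv.Perm (Fin n), (Z y j k (π l) (π m))^2 * E y u π := by
    rw [T, Finset.mul_sum]
    have hpt : ∀ π : Equiv.Perm (Fin n), (∑ r, ∑ s, (Z y j k r s)^2) * E y u π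
        = ∑ l, ∑ m, (Z y j k (π l) (π m))^2 * E y u π := by
      intro π
      have hre : (∑ r, ∑ s, (Z y j k r s)^2) = ∑ l, ∑ m, (Z y j k (π l) (π m))^2 := by
        rw [← Equiv.sum_comp π (fun r => ∑ s, (Z y j k r s)^2)]
        refine Finset.sum_congr rfl (fun l _ => ?_)
        rw [← Equiv.sum_comp π (fun s => (Z y j k (π l) s)^2)]
      rw [hre, Finset.sum_mul]
      exact Finset.sum_congr rfl (fun l _ => Finset.sum_mul _ _ _)
    rw [Finset.sum_congr rfl (fun π _ => hpt π), Finset.sum_comm]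
    exact Finset.sum_congr rfl (fun l _ => Finset.sum_comm)
  -- (d) diagonal-weight sum
  have hD : ∑ l : Fin n, ∑ m : Fin n, (if l = m then (0:ℂ) else S y u j k)
      = (n : ℂ) * ((n : ℂ) - 1) * S y u j k := by
    have inner : ∀ l : Fin n, ∑ m : Fin n, (if l = m then (0:ℂ) else S y u j k)
        = ((n : ℂ) - 1) * S y u j k := by
      intro l
      have pt : ∀ m : Fin n, (if l = m then (0:ℂ) else S y u j k)
          = S y u j k - (if l = m then S y u j k else 0) := by
        intro m; by_cases h : l = m <;> simp [h]
      rw [Finset.sum_congr rfl (fun m _ => pt m), Finset.sum_sub_distrib,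
        Finset.sum_const, Finset.sum_ite_eq Finset.univ l (fun _ => S y u j k)]
      simp only [Finset.mem_univ, if_pos, Finset.card_univ, Fintype.card_fin, nsmul_eq_mul]
      ring
    rw [Finset.sum_congr rfl (fun l _ => inner l), Finset.sum_const, Finset.card_univ,
      Fintype.card_fin, nsmul_eq_mul]
    ring
  -- sum the pointwise classification over l, m
  have main : ∑ l, ∑ m, ((if l = m then (0:ℂ) else S y u j k)
        - ∑ π : Equiv.Perm (Fin n), (Z y j k (π l) (π m))^2 * E y u π)
      = ∑ l, ∑ m, ((if l = j ∧ m ≠ j ∧ m ≠ k then G y u k j m else 0)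
        + (if l = k ∧ m ≠ j ∧ m ≠ k then G y u j k m else 0)
        + (if m = k ∧ l ≠ j ∧ l ≠ k then G y u j k l else 0)
        + (if m = j ∧ l ≠ j ∧ l ≠ k then G y u k j l else 0)
        + (if l ≠ j ∧ l ≠ k ∧ m ≠ j ∧ m ≠ k ∧ l ≠ m then Hh y u j k l m else 0)) :=
    Finset.sum_congr rfl (fun l _ => Finset.sum_congr rfl (fun m _ => pointP y u hjk l m))
  rw [Finset.sum_congr rfl (fun l (_ : l ∈ Finset.univ) => Finset.sum_sub_distrib
    (s := Finset.univ) _ _), Finset.sum_sub_distrib, hD] at main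
  -- reduce the correction double sums
  have r1 : ∑ l : Fin n, ∑ m : Fin n, (if l = j ∧ m ≠ j ∧ m ≠ k then G y u k j m else 0)
      = ∑ m : Fin n, (if m ≠ j ∧ m ≠ k then G y u k j m else 0) := by
    rw [Finset.sum_comm]
    refine Finset.sum_congr rfl (fun m _ => ?_)
    rw [Finset.sum_congr rfl (fun l (_ : l ∈ Finset.univ) =>
      (ite_and (l = j) (m ≠ j ∧ m ≠ k) (G y u k j m) 0)),
      Finset.sum_ite_eq' Finset.univ j (fun _ => if m ≠ j ∧ m ≠ k then G y u k j m else 0)]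
    simp
  have r2 : ∑ l : Fin n, ∑ m : Fin n, (if l = k ∧ m ≠ j ∧ m ≠ k then G y u j k m else 0)
      = ∑ m : Fin n, (if m ≠ j ∧ m ≠ k then G y u j k m else 0) := by
    rw [Finset.sum_comm]
    refine Finset.sum_congr rfl (fun m _ => ?_)
    rw [Finset.sum_congr rfl (fun l (_ : l ∈ Finset.univ) =>
      (ite_and (l = k) (m ≠ j ∧ m ≠ k) (G y u j k m) 0)),
      Finset.sum_ite_eq' Finset.univ k (fun _ => if m ≠ j ∧ m ≠ k then G y u j k m else 0)]
    simp
  have r3 : ∑ l : Fin n, ∑ m : Fin n, (if m = k ∧ l ≠ j ∧ l ≠ k then G y u j k l else 0)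
      = ∑ l : Fin n, (if l ≠ j ∧ l ≠ k then G y u j k l else 0) := by
    refine Finset.sum_congr rfl (fun l _ => ?_)
    rw [Finset.sum_congr rfl (fun m (_ : m ∈ Finset.univ) =>
      (ite_and (m = k) (l ≠ j ∧ l ≠ k) (G y u j k l) 0)),
      Finset.sum_ite_eq' Finset.univ k (fun _ => if l ≠ j ∧ l ≠ k then G y u j k l else 0)]
    simp
  have r4 : ∑ l : Fin n, ∑ m : Fin n, (if m = j ∧ l ≠ j ∧ l ≠ k then G y u k j l else 0)
      = ∑ l : Fin n, (if l ≠ j ∧ l ≠ k then G y u k j l else 0) := by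
    refine Finset.sum_congr rfl (fun l _ => ?_)
    rw [Finset.sum_congr rfl (fun m (_ : m ∈ Finset.univ) =>
      (ite_and (m = j) (l ≠ j ∧ l ≠ k) (G y u k j l) 0)),
      Finset.sum_ite_eq' Finset.univ j (fun _ => if l ≠ j ∧ l ≠ k then G y u k j l else 0)]
    simp
  simp only [Finset.sum_add_distrib] at main
  rw [r1, r2, r3, r4] at main
  rw [← hA] at main
  rw [main]
  have split : ∀ l : Fin n, (if l ≠ j ∧ l ≠ k then G y u j k l + G y u k j l else 0)
      = (if l ≠ j ∧ l ≠ k then G y u j k l else 0)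
        + (if l ≠ j ∧ l ≠ k then G y u k j l else 0) := by
    intro l; by_cases h : l ≠ j ∧ l ≠ k <;> simp [h]
  rw [Finset.sum_congr rfl (fun l _ => split l), Finset.sum_add_distrib]
  ring

/-- Part 1. -/
lemma part1 (y : Fin n → Fin n → ℂ) (u : ℝ) (hn0 : (n : ℂ) ≠ 0) :
    4 * (n : ℂ) * (∑ π : Equiv.Perm (Fin n),
        (C y π - (∑ j, ∑ r, y j r) / (n : ℂ)) * E y u π)
      = (∑ j, ∑ k, if j ≠ k then
          ∑ π : Equiv.Perm (Fin n), Z y j k (π j) (π k) *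
            (1 - (u : ℂ) * Z y j k (π j) (π k) -
              Complex.exp (-((u : ℂ) * Z y j k (π j) (π k)))) * E y u π else 0)
        + (u : ℂ) * ∑ j, ∑ k, S y u j k := by
  have stepA : 4 * (n : ℂ) * (∑ π : Equiv.Perm (Fin n),
        (C y π - (∑ j, ∑ r, y j r) / (n : ℂ)) * E y u π)
      = ∑ π : Equiv.Perm (Fin n), ∑ j, ∑ k,
          2 * (Z y j k (π j) (π k) * E y u π) := by
    rw [Finset.mul_sum]
    refine Finset.sum_congr rfl (fun π _ => ?_)
    have expand : (2 * ∑ j, ∑ k, Z y j k (π j) (π k)) * E y u π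
        = ∑ j, ∑ k, 2 * (Z y j k (π j) (π k) * E y u π) := by
      rw [mul_assoc, Finset.sum_mul, Finset.mul_sum]
      refine Finset.sum_congr rfl (fun j _ => ?_)
      rw [Finset.sum_mul, Finset.mul_sum]
    rw [← expand, key2 y π]
    field_simp
    ring
  rw [stepA, Finset.sum_comm]
  have stepB : ∀ j : Fin n, ∑ π : Equiv.Perm (Fin n), ∑ k, 2 * (Z y j k (π j) (π k) * E y u π)
      = ∑ k, ∑ π : Equiv.Perm (Fin n), 2 * (Z y j k (π j) (π k) * E y u π) :=
    fun j => Finset.sum_comm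
  rw [Finset.sum_congr rfl (fun j _ => stepB j)]
  have stepC : ∀ j k : Fin n, ∑ π : Equiv.Perm (Fin n), 2 * (Z y j k (π j) (π k) * E y u π)
      = (if j ≠ k then ∑ π : Equiv.Perm (Fin n), Z y j k (π j) (π k) *
            (1 - (u : ℂ) * Z y j k (π j) (π k) -
              Complex.exp (-((u : ℂ) * Z y j k (π j) (π k)))) * E y u π else 0)
        + (u : ℂ) * S y u j k := by
    intro j k
    have base : ∑ π : Equiv.Perm (Fin n), 2 * (Z y j k (π j) (π k) * E y u π)
        = ∑ π : Equiv.Perm (Fin n), Z y j k (π j) (π k) *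
            (1 - Complex.exp (-((u : ℂ) * Z y j k (π j) (π k)))) * E y u π := by
      rw [← key1 y u j k, Finset.mul_sum]
    have split : ∑ π : Equiv.Perm (Fin n), Z y j k (π j) (π k) *
          (1 - Complex.exp (-((u : ℂ) * Z y j k (π j) (π k)))) * E y u π
        = (∑ π : Equiv.Perm (Fin n), Z y j k (π j) (π k) *
            (1 - (u : ℂ) * Z y j k (π j) (π k) -
              Complex.exp (-((u : ℂ) * Z y j k (π j) (π k)))) * E y u π)
          + (u : ℂ) * S y u j k := by
      rw [S, Finset.mul_sum, ← Finset.sum_add_distrib]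
      exact Finset.sum_congr rfl (fun π _ => by ring)
    by_cases h : j ≠ k
    · rw [base, split, if_pos h]
    · push_neg at h
      rw [base, split, if_neg (by simpa using h)]
      have hzero : ∀ π : Equiv.Perm (Fin n), Z y j k (π j) (π k) = 0 := by
        intro π; rw [← h, Z_diag_left]
      have z1 : ∑ π : Equiv.Perm (Fin n), Z y j k (π j) (π k) *
          (1 - (u : ℂ) * Z y j k (π j) (π k) -
            Complex.exp (-((u : ℂ) * Z y j k (π j) (π k)))) * E y u π = 0 :=
        Finset.sum_eq_zero (fun π _ => by rw [hzero π]; ring)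
      rw [z1]
  rw [Finset.sum_congr rfl (fun j _ => Finset.sum_congr rfl (fun k _ => stepC j k)),
    Finset.sum_congr rfl (fun j (_ : j ∈ Finset.univ) => Finset.sum_add_distrib),
    Finset.sum_add_distrib]
  congr 1
  rw [Finset.mul_sum]
  exact Finset.sum_congr rfl (fun j _ => (Finset.mul_sum _ _ _).symm)

set_option maxHeartbeats 2000000 in
theorem master (hn : 2 ≤ n) (y : Fin n → Fin n → ℂ) (u : ℝ) :
    ∑ π : Equiv.Perm (Fin n),
        (C y π - (∑ j, ∑ r, y j r) / (n : ℂ)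
          - (u : ℂ) * ((∑ j, ∑ r, (Yt y j r)^2) / ((n : ℂ) - 1))) * E y u π
      = (∑ j, ∑ k, if j ≠ k then
          ∑ π : Equiv.Perm (Fin n), Z y j k (π j) (π k) *
            (1 - (u : ℂ) * Z y j k (π j) (π k) -
              Complex.exp (-((u : ℂ) * Z y j k (π j) (π k)))) * E y u π else 0) / (4 * n)
        + (∑ j, ∑ k, ∑ l, if j ≠ k ∧ j ≠ l ∧ k ≠ l then
            ∑ π : Equiv.Perm (Fin n), (u : ℂ) * (Z y j k (π j) (π k))^2 *
              (1 - Complex.exp ((u : ℂ) * Z y j l (π l) (π j))) * E y u π else 0)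
            / ((n : ℂ)^2 * ((n : ℂ) - 1))
        + (∑ j, ∑ k, ∑ l, ∑ m, if j ≠ k ∧ j ≠ l ∧ j ≠ m ∧ k ≠ l ∧ k ≠ m ∧ l ≠ m then
            ∑ π : Equiv.Perm (Fin n), (u : ℂ) * (Z y j k (π j) (π k))^2 *
              (1 - Complex.exp ((u : ℂ) * Z y j l (π l) (π j) +
                (u : ℂ) * Z y k m (π m) (π k))) * E y u π else 0)
            / (4 * (n : ℂ)^2 * ((n : ℂ) - 1)) := by
  have hn0 : (n : ℂ) ≠ 0 := Nat.cast_ne_zero.mpr (by omega)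
  have hn1 : (n : ℂ) - 1 ≠ 0 := sub_ne_zero.mpr (by exact_mod_cast (by omega : n ≠ 1))
  have hcan : 4 * (n : ℂ)^2 * ((n : ℂ) - 1) ≠ 0 := by
    apply mul_ne_zero (mul_ne_zero (by norm_num) (pow_ne_zero _ hn0)) hn1
  -- abbreviations
  set W : ℂ := ∑ j, ∑ r, y j r with hWdef
  set B : ℂ := ∑ j, ∑ r, (Yt y j r)^2 with hBdef
  set SS : ℂ := ∑ j, ∑ k, S y u j k with hSSdef
  set ZZ4 : ℂ := ∑ j, ∑ k, ∑ r, ∑ s, (Z y j k r s)^2 with hZZdef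
  set AA : ℂ := ∑ j, ∑ k, ∑ l, (if j ≠ k ∧ j ≠ l ∧ k ≠ l then G y u j k l else 0) with hAAdef
  set BB : ℂ := ∑ j, ∑ k, ∑ l, ∑ m,
    (if j ≠ k ∧ j ≠ l ∧ j ≠ m ∧ k ≠ l ∧ k ≠ m ∧ l ≠ m then Hh y u j k l m else 0) with hBBdef
  set t1 : ℂ := ∑ j, ∑ k, (if j ≠ k then
      ∑ π : Equiv.Perm (Fin n), Z y j k (π j) (π k) *
        (1 - (u : ℂ) * Z y j k (π j) (π k) -
          Complex.exp (-((u : ℂ) * Z y j k (π j) (π k)))) * E y u π else 0) with ht1def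
  set t2 : ℂ := ∑ j, ∑ k, ∑ l, (if j ≠ k ∧ j ≠ l ∧ k ≠ l then
      ∑ π : Equiv.Perm (Fin n), (u : ℂ) * (Z y j k (π j) (π k))^2 *
        (1 - Complex.exp ((u : ℂ) * Z y j l (π l) (π j))) * E y u π else 0) with ht2def
  set t3 : ℂ := ∑ j, ∑ k, ∑ l, ∑ m,
    (if j ≠ k ∧ j ≠ l ∧ j ≠ m ∧ k ≠ l ∧ k ≠ m ∧ l ≠ m then
      ∑ π : Equiv.Perm (Fin n), (u : ℂ) * (Z y j k (π j) (π k))^2 *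
        (1 - Complex.exp ((u : ℂ) * Z y j l (π l) (π j) +
          (u : ℂ) * Z y k m (π m) (π k))) * E y u π else 0) with ht3def
  set P1 : ℂ := ∑ π : Equiv.Perm (Fin n), (C y π - W / (n : ℂ)) * E y u π with hP1def
  -- split the left-hand side
  have hL : ∑ π : Equiv.Perm (Fin n),
        (C y π - W / (n : ℂ) - (u : ℂ) * (B / ((n : ℂ) - 1))) * E y u π
      = P1 - (u : ℂ) * (B / ((n : ℂ) - 1)) * T y u := by
    rw [hP1def, T, Finset.mul_sum, ← Finset.sum_sub_distrib]
    exact Finset.sum_congr rfl (fun π _ => by ring)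
  have h1 : 4 * (n : ℂ) * P1 = t1 + (u : ℂ) * SS := part1 y u hn0
  have h3 : ZZ4 = 4 * (n : ℂ)^2 * B := Zsq_total y hn0
  -- h2 : summed decoupling identity
  have h2a : ∀ j k : Fin n,
      (n : ℂ) * ((n : ℂ) - 1) * S y u j k - (∑ r, ∑ s, (Z y j k r s)^2) * T y u
        = (if j ≠ k then
            2 * (∑ l, if l ≠ j ∧ l ≠ k then G y u j k l + G y u k j l else 0)
              + ∑ l, ∑ m, (if l ≠ j ∧ l ≠ k ∧ m ≠ j ∧ m ≠ k ∧ l ≠ m then Hh y u j k l m else 0)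
          else 0) := by
    intro j k
    by_cases h : j ≠ k
    · rw [if_pos h]; exact key5 y u h
    · push_neg at h
      rw [if_neg (fun hne => hne h)]
      have hS : S y u j k = 0 := Finset.sum_eq_zero (fun π _ => by
        rw [← h, Z_diag_left]; ring)
      have hZ : ∑ r, ∑ s, (Z y j k r s)^2 = 0 :=
        Finset.sum_eq_zero (fun r _ => Finset.sum_eq_zero (fun s _ => by
          rw [← h, Z_diag_left]; ring))
      rw [hS, hZ]; ring
  have h2b : ∑ j, ∑ k, ((n : ℂ) * ((n : ℂ) - 1) * S y u j k
        - (∑ r, ∑ s, (Z y j k r s)^2) * T y u)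
      = (n : ℂ) * ((n : ℂ) - 1) * SS - ZZ4 * T y u := by
    rw [Finset.sum_congr rfl (fun j (_ : j ∈ Finset.univ) => Finset.sum_sub_distrib _ _),
      Finset.sum_sub_distrib]
    congr 1
    · rw [hSSdef, Finset.mul_sum]
      exact Finset.sum_congr rfl (fun j _ => (Finset.mul_sum _ _ _).symm)
    · rw [hZZdef, Finset.sum_mul]
      exact Finset.sum_congr rfl (fun j _ => (Finset.sum_mul _ _ _).symm)
  -- RHS of the summed identity
  have hX : ∑ j, ∑ k, (if j ≠ k then
        2 * (∑ l, if l ≠ j ∧ l ≠ k then G y u j k l + G y u k j l else 0) else 0)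
      = 4 * AA := by
    have pt : ∀ j k : Fin n, (if j ≠ k then
          2 * (∑ l, if l ≠ j ∧ l ≠ k then G y u j k l + G y u k j l else 0) else 0)
        = ∑ l, (2 * (if j ≠ k ∧ l ≠ j ∧ l ≠ k then G y u j k l else 0)
            + 2 * (if j ≠ k ∧ l ≠ j ∧ l ≠ k then G y u k j l else 0)) := by
      intro j k
      by_cases h : j ≠ k
      · rw [if_pos h, Finset.mul_sum]
        refine Finset.sum_congr rfl (fun l _ => ?_)
        by_cases hd : l ≠ j ∧ l ≠ k
        · rw [if_pos hd, if_pos ⟨h, hd.1, hd.2⟩, if_pos ⟨h, hd.1, hd.2⟩]; ring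
        · rw [if_neg hd, if_neg (fun hc => hd ⟨hc.2.1, hc.2.2⟩),
            if_neg (fun hc => hd ⟨hc.2.1, hc.2.2⟩)]; ring
      · rw [if_neg h]
        refine (Finset.sum_eq_zero (fun l _ => ?_)).symm
        rw [if_neg (fun hc => h hc.1), if_neg (fun hc => h hc.1)]; ring
    rw [Finset.sum_congr rfl (fun j _ => Finset.sum_congr rfl (fun k _ => pt j k))]
    simp only [Finset.sum_add_distrib, ← Finset.mul_sum]
    have hswap : ∑ j, ∑ k, ∑ l, (if j ≠ k ∧ l ≠ j ∧ l ≠ k then G y u k j l else 0)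
        = ∑ j, ∑ k, ∑ l, (if j ≠ k ∧ l ≠ j ∧ l ≠ k then G y u j k l else 0) := by
      rw [Finset.sum_comm]
      refine Finset.sum_congr rfl (fun j _ => Finset.sum_congr rfl (fun k _ =>
        Finset.sum_congr rfl (fun l _ => ?_)))
      refine if_congr ?_ rfl rfl
      constructor
      · rintro ⟨a, b, c⟩; exact ⟨Ne.symm a, c, b⟩
      · rintro ⟨a, b, c⟩; exact ⟨Ne.symm a, c, b⟩
    have hcond : ∑ j, ∑ k, ∑ l, (if j ≠ k ∧ l ≠ j ∧ l ≠ k then G y u j k l else 0) = AA := by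
      rw [hAAdef]
      refine Finset.sum_congr rfl (fun j _ => Finset.sum_congr rfl (fun k _ =>
        Finset.sum_congr rfl (fun l _ => ?_)))
      refine if_congr ?_ rfl rfl
      constructor
      · rintro ⟨a, b, c⟩; exact ⟨a, Ne.symm b, Ne.symm c⟩
      · rintro ⟨a, b, c⟩; exact ⟨a, Ne.symm b, Ne.symm c⟩
    rw [hswap, hcond]
    ring
  have hY : ∑ j, ∑ k, (if j ≠ k then
        ∑ l, ∑ m, (if l ≠ j ∧ l ≠ k ∧ m ≠ j ∧ m ≠ k ∧ l ≠ m then Hh y u j k l m else 0)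
        else 0)
      = BB := by
    rw [hBBdef]
    refine Finset.sum_congr rfl (fun j _ => Finset.sum_congr rfl (fun k _ => ?_))
    by_cases h : j ≠ k
    · rw [if_pos h]
      refine Finset.sum_congr rfl (fun l _ => Finset.sum_congr rfl (fun m _ => ?_))
      refine if_congr ?_ rfl rfl
      constructor
      · rintro ⟨a, b, c, d, e⟩; exact ⟨h, Ne.symm a, Ne.symm c, Ne.symm b, Ne.symm d, e⟩
      · rintro ⟨a, b, c, d, e, f⟩; exact ⟨Ne.symm b, Ne.symm d, Ne.symm c, Ne.symm e, f⟩
    · rw [if_neg h]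
      refine (Finset.sum_eq_zero (fun l _ => Finset.sum_eq_zero (fun m _ => ?_))).symm
      exact if_neg (fun hc => h hc.1)
  have h2 : (n : ℂ) * ((n : ℂ) - 1) * SS - ZZ4 * T y u = 4 * AA + BB := by
    rw [← h2b, Finset.sum_congr rfl (fun j _ => Finset.sum_congr rfl (fun k _ => h2a j k))]
    have split : ∀ j k : Fin n, (if j ≠ k then
          2 * (∑ l, if l ≠ j ∧ l ≠ k then G y u j k l + G y u k j l else 0)
            + ∑ l, ∑ m, (if l ≠ j ∧ l ≠ k ∧ m ≠ j ∧ m ≠ k ∧ l ≠ m then Hh y u j k l m else 0)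
          else 0)
        = (if j ≠ k then
            2 * (∑ l, if l ≠ j ∧ l ≠ k then G y u j k l + G y u k j l else 0) else 0)
          + (if j ≠ k then
            ∑ l, ∑ m, (if l ≠ j ∧ l ≠ k ∧ m ≠ j ∧ m ≠ k ∧ l ≠ m then Hh y u j k l m else 0)
            else 0) := by
      intro j k; by_cases h : j ≠ k <;> simp [h]
    rw [Finset.sum_congr rfl (fun j _ => Finset.sum_congr rfl (fun k _ => split j k)),
      Finset.sum_congr rfl (fun j (_ : j ∈ Finset.univ) => Finset.sum_add_distrib),
      Finset.sum_add_distrib, hX, hY]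
  -- rewrite t2, t3 via G, Hh
  have ht2 : t2 = (u : ℂ) * AA := by
    have inner : ∀ j k l : Fin n, (if j ≠ k ∧ j ≠ l ∧ k ≠ l then
          ∑ π : Equiv.Perm (Fin n), (u : ℂ) * (Z y j k (π j) (π k))^2 *
            (1 - Complex.exp ((u : ℂ) * Z y j l (π l) (π j))) * E y u π else 0)
        = (u : ℂ) * (if j ≠ k ∧ j ≠ l ∧ k ≠ l then G y u j k l else 0) := by
      intro j k l
      by_cases h : j ≠ k ∧ j ≠ l ∧ k ≠ l
      · rw [if_pos h, if_pos h, G, Finset.mul_sum]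
        exact Finset.sum_congr rfl (fun π _ => by ring)
      · rw [if_neg h, if_neg h, mul_zero]
    rw [ht2def, Finset.sum_congr rfl (fun j (_ : j ∈ Finset.univ) =>
      Finset.sum_congr rfl (fun k (_ : k ∈ Finset.univ) =>
        Finset.sum_congr rfl (fun l (_ : l ∈ Finset.univ) => inner j k l))), hAAdef]
    simp only [← Finset.mul_sum]
  have ht3 : t3 = (u : ℂ) * BB := by
    have inner : ∀ j k l m : Fin n,
        (if j ≠ k ∧ j ≠ l ∧ j ≠ m ∧ k ≠ l ∧ k ≠ m ∧ l ≠ m then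
          ∑ π : Equiv.Perm (Fin n), (u : ℂ) * (Z y j k (π j) (π k))^2 *
            (1 - Complex.exp ((u : ℂ) * Z y j l (π l) (π j) +
              (u : ℂ) * Z y k m (π m) (π k))) * E y u π else 0)
        = (u : ℂ) * (if j ≠ k ∧ j ≠ l ∧ j ≠ m ∧ k ≠ l ∧ k ≠ m ∧ l ≠ m then
            Hh y u j k l m else 0) := by
      intro j k l m
      by_cases h : j ≠ k ∧ j ≠ l ∧ j ≠ m ∧ k ≠ l ∧ k ≠ m ∧ l ≠ m
      · rw [if_pos h, if_pos h, Hh, Finset.mul_sum]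
        exact Finset.sum_congr rfl (fun π _ => by ring)
      · rw [if_neg h, if_neg h, mul_zero]
    rw [ht3def, Finset.sum_congr rfl (fun j (_ : j ∈ Finset.univ) =>
      Finset.sum_congr rfl (fun k (_ : k ∈ Finset.univ) =>
        Finset.sum_congr rfl (fun l (_ : l ∈ Finset.univ) =>
          Finset.sum_congr rfl (fun m (_ : m ∈ Finset.univ) => inner j k l m)))), hBBdef]
    simp only [← Finset.mul_sum]
  -- final assembly
  rw [hL]
  apply mul_left_cancel₀ hcan
  have e1 : (4 * (n : ℂ)^2 * ((n : ℂ) - 1)) * (P1 - (u : ℂ) * (B / ((n : ℂ) - 1)) * T y u)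
      = (n : ℂ) * ((n : ℂ) - 1) * (4 * (n : ℂ) * P1)
        - 4 * (n : ℂ)^2 * (u : ℂ) * B * T y u := by
    field_simp
  have e2 : (4 * (n : ℂ)^2 * ((n : ℂ) - 1)) * (t1 / (4 * (n : ℂ))
        + t2 / ((n : ℂ)^2 * ((n : ℂ) - 1)) + t3 / (4 * (n : ℂ)^2 * ((n : ℂ) - 1)))
      = (n : ℂ) * ((n : ℂ) - 1) * t1 + 4 * t2 + t3 := by
    field_simp [hn0, hn1]
  rw [e1, e2, h1, ht2, ht3]
  linear_combination (u : ℂ) * h2 + (u : ℂ) * T y u * h3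


end Stmt14Aux
end

open scoped BigOperators

/-- Lemma 7, identity (18): `Σ_r (c_r − α − uβ) e^{u c_r} = f(u)` for `u ∈ [0,1]`. -/
theorem stmt_14
    (n : ℕ) (hn : 2 ≤ n) (y : Fin n → Fin n → ℂ)
    (z : Fin n → Fin n → Fin n → Fin n → ℂ)
    (hz : ∀ j k r s, z j k r s = y j r - y k r - y j s + y k s)
    (c : Equiv.Perm (Fin n) → ℂ)
    (hc : ∀ π, c π = ∑ j, y j (π j))
    (ytil : Fin n → Fin n → ℂ)
    (hytil : ∀ j r, ytil j r =
      y j r - (∑ k, y k r) / n - (∑ s, y j s) / n + (∑ k, ∑ s, y k s) / (n : ℂ) ^ 2)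
    (α β : ℂ)
    (hα : α = (∑ j, ∑ r, y j r) / n)
    (hβ : β = (∑ j, ∑ r, (ytil j r) ^ 2) / ((n : ℂ) - 1))
    (f₁ f₂ f₃ f : ℝ → ℂ)
    (hf₁ : ∀ u : ℝ, f₁ u = ∑ j, ∑ k, if j ≠ k then
      ∑ π : Equiv.Perm (Fin n), z j k (π j) (π k) *
        (1 - (u : ℂ) * z j k (π j) (π k) - Complex.exp (-((u : ℂ) * z j k (π j) (π k)))) *
        Complex.exp ((u : ℂ) * c π) else 0)
    (hf₂ : ∀ u : ℝ, f₂ u = ∑ j, ∑ k, ∑ l, if j ≠ k ∧ j ≠ l ∧ k ≠ l then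
      ∑ π : Equiv.Perm (Fin n), (u : ℂ) * (z j k (π j) (π k)) ^ 2 *
        (1 - Complex.exp ((u : ℂ) * z j l (π l) (π j))) *
        Complex.exp ((u : ℂ) * c π) else 0)
    (hf₃ : ∀ u : ℝ, f₃ u = ∑ j, ∑ k, ∑ l, ∑ m,
      if j ≠ k ∧ j ≠ l ∧ j ≠ m ∧ k ≠ l ∧ k ≠ m ∧ l ≠ m then
      ∑ π : Equiv.Perm (Fin n), (u : ℂ) * (z j k (π j) (π k)) ^ 2 *
        (1 - Complex.exp ((u : ℂ) * z j l (π l) (π j) + (u : ℂ) * z k m (π m) (π k))) *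
        Complex.exp ((u : ℂ) * c π) else 0)
    (hf : ∀ u : ℝ, f u = f₁ u / (4 * n) + f₂ u / ((n : ℂ) ^ 2 * ((n : ℂ) - 1)) +
      f₃ u / (4 * (n : ℂ) ^ 2 * ((n : ℂ) - 1)))
    (u : ℝ) (hu : u ∈ Set.Icc (0 : ℝ) 1) :
    ∑ π : Equiv.Perm (Fin n), (c π - α - (u : ℂ) * β) * Complex.exp ((u : ℂ) * c π) =
      f u := by
  have hzZ : z = Stmt14Aux.Z y := by
    funext j k r s; rw [hz]; rfl
  have hcC : c = Stmt14Aux.C y := by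
    funext π; rw [hc]; rfl
  have hyt : ytil = Stmt14Aux.Yt y := by
    funext j r; rw [hytil]; rfl
  subst hzZ hcC hyt
  rw [hf u, hf₁ u, hf₂ u, hf₃ u, hα, hβ]
  have := Stmt14Aux.master hn y u
  simpa only [Stmt14Aux.E] using this
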